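/- Let α ∈ (0, 1/2) and s > 0. Then ∫₀^s ∫₀^s (s - max(u,v)) · (s-v)^{-(1+α)} (s-u)^{-(1+α)} du dv = 2 s^{1-2α} / ((1-α)(1-2α)). -/

import Mathlib

open MeasureTheory Real

/-- For `α ∈ (0,1/2)` and `s > 0`,
`∫₀ˢ ∫₀ˢ (s - max(u,v)) (s-v)^{-(1+α)} (s-u)^{-(1+α)} du dv
  = 2 s^{1-2α} / ((1-α)(1-2α))`. -/
theorem stmt_17 (α s : ℝ) (hα : α ∈ Set.Ioo (0:ℝ) (1/2)) (hs : 0 < s) :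
    (∫ v in (0:ℝ)..s, ∫ u in (0:ℝ)..s,
        (s - max u v) * (s - v) ^ (-(1 + α)) * (s - u) ^ (-(1 + α)))
      = 2 * s ^ (1 - 2 * α) / ((1 - α) * (1 - 2 * α)) := by
  obtain ⟨hα0, hα2⟩ := hα
  have hα1 : α < 1 := by linarith
  have hαne : α ≠ 0 := ne_of_gt hα0
  have h1α : (0:ℝ) < 1 - α := by linarith
  have h12α : (0:ℝ) < 1 - 2*α := by linarith
  -- `x * x^(-(1+α)) = x^(-α)` for `x ≥ 0`
  have hmul : ∀ x : ℝ, 0 ≤ x → x * x ^ (-(1+α)) = x ^ (-α) := by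
    intro x hx
    rcases hx.eq_or_lt with h | h
    · rw [← h, Real.zero_rpow (by linarith), Real.zero_rpow (by linarith), mul_zero]
    · nth_rewrite 1 [← Real.rpow_one x]
      rw [← Real.rpow_add h]
      congr 1; ring
  -- evaluation of the inner integral for `0 < y ≤ s`
  have inner_eval : ∀ y : ℝ, 0 < y → y ≤ s →
      (∫ x in (0:ℝ)..s, min x y * x ^ (-(1+α)))
        = y ^ (1-α) / (1-α) + y * ((s ^ (-α) - y ^ (-α)) / (-α)) := by
    intro y hy hys
    have hi1 : IntervalIntegrable (fun x => min x y * x ^ (-(1+α))) volume 0 y := by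
      refine (intervalIntegral.intervalIntegrable_rpow' (r := -α)
        (by linarith)).congr ?_
      rw [Set.uIoc_of_le hy.le]
      intro x hx
      show x ^ (-α) = min x y * x ^ (-(1+α))
      rw [min_eq_left hx.2, hmul x hx.1.le]
    have hi2 : IntervalIntegrable (fun x => min x y * x ^ (-(1+α))) volume y s := by
      apply ContinuousOn.intervalIntegrable
      apply ContinuousOn.mul
      · exact (continuous_id.min continuous_const).continuousOn
      · apply ContinuousOn.rpow_const continuousOn_id
        intro x hx
        rw [Set.uIcc_of_le hys] at hx
        exact Or.inl (ne_of_gt (lt_of_lt_of_le hy hx.1))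
    have h1 : (∫ x in (0:ℝ)..y, min x y * x ^ (-(1+α))) = y ^ (1-α) / (1-α) := by
      have hcongr : Set.EqOn (fun x => min x y * x ^ (-(1+α)))
          (fun x => x ^ (-α)) (Set.uIcc 0 y) := by
        intro x hx
        rw [Set.uIcc_of_le hy.le] at hx
        simp only
        rw [min_eq_left hx.2, hmul x hx.1]
      rw [intervalIntegral.integral_congr hcongr,
        integral_rpow (Or.inl (by linarith))]
      rw [Real.zero_rpow (by linarith : -α + 1 ≠ 0)]
      rw [show -α + 1 = 1 - α by ring]
      ring
    have h2 : (∫ x in y..s, min x y * x ^ (-(1+α)))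
        = y * ((s ^ (-α) - y ^ (-α)) / (-α)) := by
      have hcongr : Set.EqOn (fun x => min x y * x ^ (-(1+α)))
          (fun x => y * x ^ (-(1+α))) (Set.uIcc y s) := by
        intro x hx
        rw [Set.uIcc_of_le hys] at hx
        simp only
        rw [min_eq_right hx.1]
      rw [intervalIntegral.integral_congr hcongr,
        intervalIntegral.integral_const_mul,
        integral_rpow (Or.inr ⟨by intro h; apply hαne; linarith, by
          rw [Set.uIcc_of_le hys]
          intro h
          exact absurd h.1 (not_le.mpr hy)⟩)]
      rw [show -(1+α) + 1 = -α by ring]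
    rw [← intervalIntegral.integral_add_adjacent_intervals hi1 hi2, h1, h2]
  -- substitution `u ↦ s - u` in the inner integral
  have step1 : ∀ v : ℝ,
      (∫ u in (0:ℝ)..s, (s - max u v) * (s - v) ^ (-(1+α)) * (s - u) ^ (-(1+α)))
        = ∫ x in (0:ℝ)..s, min x (s - v) * (s - v) ^ (-(1+α)) * x ^ (-(1+α)) := by
    intro v
    have h := intervalIntegral.integral_comp_sub_left (a := 0) (b := s)
      (fun x => min x (s - v) * (s - v) ^ (-(1+α)) * x ^ (-(1+α))) s
    simp only [sub_self, sub_zero] at h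
    rw [← h]
    apply intervalIntegral.integral_congr
    intro u _
    simp only
    rw [min_sub_sub_left]
  simp only [step1]
  -- substitution `v ↦ s - v` in the outer integral
  have step2 : (∫ v in (0:ℝ)..s,
        ∫ x in (0:ℝ)..s, min x (s - v) * (s - v) ^ (-(1+α)) * x ^ (-(1+α)))
      = ∫ y in (0:ℝ)..s,
        ∫ x in (0:ℝ)..s, min x y * y ^ (-(1+α)) * x ^ (-(1+α)) := by
    have h := intervalIntegral.integral_comp_sub_left (a := 0) (b := s)
      (fun y => ∫ x in (0:ℝ)..s, min x y * y ^ (-(1+α)) * x ^ (-(1+α))) s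
    simpa using h
  rw [step2]
  -- factor out `y ^ (-(1+α))`
  have hfac : ∀ y : ℝ, (∫ x in (0:ℝ)..s, min x y * y ^ (-(1+α)) * x ^ (-(1+α)))
      = y ^ (-(1+α)) * ∫ x in (0:ℝ)..s, min x y * x ^ (-(1+α)) := by
    intro y
    rw [← intervalIntegral.integral_const_mul]
    apply intervalIntegral.integral_congr
    intro x _
    simp only
    ring
  simp only [hfac]
  -- rewrite outer integrand explicitly
  have hcong : Set.EqOn
      (fun y => y ^ (-(1+α)) * ∫ x in (0:ℝ)..s, min x y * x ^ (-(1+α)))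
      (fun y => (1/(1-α) + 1/α) * y ^ (-(2*α)) + (-(s ^ (-α))/α) * y ^ (-α))
      (Set.uIcc 0 s) := by
    intro y hy
    rw [Set.uIcc_of_le hs.le] at hy
    rcases hy.1.eq_or_lt with h0 | h0
    · simp only [← h0]
      rw [Real.zero_rpow (by linarith : -(1+α) ≠ 0),
        Real.zero_rpow (by intro h; apply hαne; linarith : -(2*α) ≠ 0),
        Real.zero_rpow (by intro h; apply hαne; linarith : -α ≠ 0)]
      ring
    · simp only
      rw [inner_eval y h0 hy.2]
      have e1 : y ^ (-(1+α)) * y ^ (1-α) = y ^ (-(2*α)) := by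
        rw [← Real.rpow_add h0]; congr 1; ring
      have e2 : y ^ (-(1+α)) * y = y ^ (-α) := by
        nth_rewrite 2 [← Real.rpow_one y]
        rw [← Real.rpow_add h0]; congr 1; ring
      have e3 : y ^ (-α) * y ^ (-α) = y ^ (-(2*α)) := by
        rw [← Real.rpow_add h0]; congr 1; ring
      linear_combination (1/(1-α)) * e1
        + ((s ^ (-α) - y ^ (-α))/(-α)) * e2 + (1/α) * e3
  rw [intervalIntegral.integral_congr hcong]
  have hint1 : IntervalIntegrable (fun y : ℝ => y ^ (-(2*α))) volume 0 s :=
    intervalIntegral.intervalIntegrable_rpow' (by linarith)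
  have hint2 : IntervalIntegrable (fun y : ℝ => y ^ (-α)) volume 0 s :=
    intervalIntegral.intervalIntegrable_rpow' (by linarith)
  rw [intervalIntegral.integral_add (hint1.const_mul _) (hint2.const_mul _),
    intervalIntegral.integral_const_mul, intervalIntegral.integral_const_mul,
    integral_rpow (Or.inl (by linarith)), integral_rpow (Or.inl (by linarith)),
    Real.zero_rpow (by linarith : -(2*α) + 1 ≠ 0),
    Real.zero_rpow (by linarith : -α + 1 ≠ 0),
    show -(2*α) + 1 = 1 - 2*α by ring, show -α + 1 = 1 - α by ring]
  have e4 : s ^ (-α) * s ^ (1-α) = s ^ (1 - 2*α) := by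
    rw [← Real.rpow_add hs]; congr 1; ring
  rw [← e4]
  field_simp
  have h2' : (1 - α*2) ≠ 0 := by linarith
  field_simp
  ring
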